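/- Let R be a commutative ring and let M and N be R-modules such that there is an R-module isomorphism N ⊗[R] M ≅ R. Then M is a finitely generated projective R-module, and for every prime ideal p of R the localization M_p is a free R_p-module of rank 1, i.e. M_p ≅ R_p as R_p-modules. -/

import Mathlib

open scoped TensorProduct

set_option synthInstance.maxHeartbeats 1000000
set_option maxHeartbeats 1000000

section Aux

variable {R : Type*} [CommRing R]

theorem aux_exists_isUnit_of_sum [IsLocalRing R] {ι : Type*} (s : Finset ι) (f : ι → R)
    (h : IsUnit (∑ i ∈ s, f i)) : ∃ i ∈ s, IsUnit (f i) := by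
  classical
  induction s using Finset.cons_induction with
  | empty => simp only [Finset.sum_empty] at h; exact absurd h not_isUnit_zero
  | cons a s ha ih =>
    rw [Finset.sum_cons] at h
    rcases IsLocalRing.isUnit_or_isUnit_of_isUnit_add h with h1 | h2
    · exact ⟨a, Finset.mem_cons_self _ _, h1⟩
    · obtain ⟨i, hi, hu⟩ := ih h2
      exact ⟨i, Finset.mem_cons_of_mem hi, hu⟩

theorem aux_subsingleton_tensor_left {M N : Type*} [AddCommGroup M] [Module R M]
    [AddCommGroup N] [Module R N] [Subsingleton N] : Subsingleton (N ⊗[R] M) := by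
  have : ∀ z : N ⊗[R] M, z = 0 := fun z => by
    refine z.induction_on rfl (fun n m => ?_) (fun a b ha hb => by rw [ha, hb, add_zero])
    rw [Subsingleton.elim n 0, TensorProduct.zero_tmul]
  exact ⟨fun a b => by rw [this a, this b]⟩

theorem aux_subsingleton_tensor_right {M N : Type*} [AddCommGroup M] [Module R M]
    [AddCommGroup N] [Module R N] [Subsingleton N] : Subsingleton (M ⊗[R] N) := by
  have : ∀ z : M ⊗[R] N, z = 0 := fun z => by
    refine z.induction_on rfl (fun m n => ?_) (fun a b ha hb => by rw [ha, hb, add_zero])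
    rw [Subsingleton.elim n 0, TensorProduct.tmul_zero]
  exact ⟨fun a b => by rw [this a, this b]⟩

/-- Key computation: if `M` is free of rank one and `e` is a pairing sending a given sum of pure
tensors to `1`, then the "dual basis" identity holds. -/
theorem aux_key {M N : Type*} [AddCommGroup M] [Module R M] [AddCommGroup N] [Module R N]
    (e : N ⊗[R] M →ₗ[R] R) (φ : M ≃ₗ[R] R) {ι : Type*} (s : Finset ι)
    (y : ι → N) (x : ι → M) (h1 : e (∑ i ∈ s, y i ⊗ₜ[R] x i) = 1) (m : M) :
    ∑ i ∈ s, e (y i ⊗ₜ[R] m) • x i = m := by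
  have hψ : ∀ r : R, φ.symm r = r • φ.symm 1 := fun r => by
    rw [← map_smul, smul_eq_mul, mul_one]
  have hx : ∀ v : M, v = φ v • φ.symm 1 := fun v => by
    conv_lhs => rw [← φ.symm_apply_apply v, hψ (φ v)]
  have hpt : ∀ (n : N) (x' : M),
      e (n ⊗ₜ[R] m) • x' = φ.symm (φ m * e (n ⊗ₜ[R] x')) := by
    intro n x'
    have hev : ∀ v : M, e (n ⊗ₜ[R] v) = φ v * e (n ⊗ₜ[R] φ.symm 1) := fun v => by
      conv_lhs => rw [hx v]
      rw [TensorProduct.tmul_smul, map_smul, smul_eq_mul]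
    have lhs : e (n ⊗ₜ[R] m) • x'
        = (φ m * e (n ⊗ₜ[R] φ.symm 1) * φ x') • φ.symm 1 := by
      conv_lhs => rw [hev m, hx x']
      rw [smul_smul]
    have rhs : φ.symm (φ m * e (n ⊗ₜ[R] x'))
        = (φ m * (φ x' * e (n ⊗ₜ[R] φ.symm 1))) • φ.symm 1 := by
      rw [hev x', hψ]
    rw [lhs, rhs]
    congr 1
    ring
  calc ∑ i ∈ s, e (y i ⊗ₜ[R] m) • x i
      = ∑ i ∈ s, φ.symm (φ m * e (y i ⊗ₜ[R] x i)) := Finset.sum_congr rfl fun i _ => hpt _ _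
    _ = φ.symm (φ m * ∑ i ∈ s, e (y i ⊗ₜ[R] x i)) := by rw [Finset.mul_sum, map_sum]
    _ = m := by rw [← map_sum, h1, mul_one, φ.symm_apply_apply]

/-- Over a local ring, an invertible module is free of rank one. -/
theorem aux_local [IsLocalRing R] {M N : Type*} [AddCommGroup M] [Module R M]
    [AddCommGroup N] [Module R N] (e : N ⊗[R] M ≃ₗ[R] R) : Nonempty (M ≃ₗ[R] R) := by
  classical
  obtain ⟨T, hT⟩ := TensorProduct.exists_finset (e.symm 1)
  have hsum : (∑ q ∈ T, e (q.1 ⊗ₜ[R] q.2)) = 1 := by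
    rw [← map_sum, ← hT, e.apply_symm_apply]
  obtain ⟨q, hqT, hu⟩ := aux_exists_isUnit_of_sum T _ (hsum ▸ isUnit_one)
  obtain ⟨u, hu'⟩ := hu
  set y := q.1
  set x := q.2
  let g : M →ₗ[R] R := ((↑u⁻¹ : R)) • (e.toLinearMap ∘ₗ TensorProduct.mk R N M y)
  have hg_apply : ∀ m : M, g m = (↑u⁻¹ : R) * e (y ⊗ₜ[R] m) := fun m => rfl
  have hgx : g x = 1 := by
    rw [hg_apply, ← hu', Units.inv_mul]
  let f : R →ₗ[R] M := LinearMap.toSpanSingleton R M x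
  have hf_apply : ∀ r : R, f r = r • x := fun r => rfl
  have hgf : ∀ r : R, g (f r) = r := fun r => by
    rw [hf_apply, map_smul, hgx, smul_eq_mul, mul_one]
  set K := LinearMap.ker g with hK
  let qm : M →ₗ[R] M := LinearMap.id - f ∘ₗ g
  have hq : ∀ m : M, qm m ∈ K := fun m => by
    simp only [hK, LinearMap.mem_ker, qm, LinearMap.sub_apply, LinearMap.id_apply,
      LinearMap.comp_apply, map_sub, hgf, sub_self]
  let φM : M ≃ₗ[R] R × K :=
    LinearEquiv.ofLinear (LinearMap.prod g (qm.codRestrict K hq))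
      (LinearMap.coprod f K.subtype)
      (by
        apply LinearMap.ext
        rintro ⟨r, k⟩
        have hk : g (k : M) = 0 := k.2
        refine Prod.ext ?_ (Subtype.ext ?_)
        · show g (f r + (k : M)) = r
          rw [map_add, hgf, hk, add_zero]
        · show (f r + (k : M)) - f (g (f r + (k : M))) = (k : M)
          rw [map_add, hgf, hk, add_zero]
          abel
        )
      (by
        apply LinearMap.ext
        intro m
        show f (g m) + (m - f (g m)) = m
        abel)
  let h : (N × (N ⊗[R] K)) ≃ₗ[R] R :=
    (LinearEquiv.prodCongr (TensorProduct.rid R N) (LinearEquiv.refl R (N ⊗[R] K))).symm ≪≫ₗ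
      (TensorProduct.prodRight R R N R ↥K).symm ≪≫ₗ
      (TensorProduct.congr (LinearEquiv.refl R N) φM).symm ≪≫ₗ e
  let π : R →ₗ[R] R :=
    h.toLinearMap ∘ₗ LinearMap.inl R N (N ⊗[R] K) ∘ₗ
      LinearMap.fst R N (N ⊗[R] K) ∘ₗ h.symm.toLinearMap
  have hπ_apply : ∀ r : R, π r = h ((h.symm r).1, 0) := fun r => rfl
  have hπ : ∀ r : R, π r = r * π 1 := fun r => by
    conv_lhs => rw [show r = r • (1 : R) by rw [smul_eq_mul, mul_one]]
    rw [map_smul, smul_eq_mul]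
  set a := π 1 with ha
  have hππ : ∀ z : R, π (π z) = π z := fun z => by
    rw [hπ_apply (π z), hπ_apply z, h.symm_apply_apply]
  have hidem : a * a = a := by
    have h2 := hππ 1
    rw [hπ (π 1)] at h2
    rw [← ha] at h2
    exact h2
  have hze : a = 0 ∨ a = 1 := by
    rcases IsLocalRing.isUnit_or_isUnit_one_sub_self a with hu1 | hu2
    · exact Or.inr (hu1.mul_left_cancel (by rw [mul_one]; exact hidem))
    · refine Or.inl (hu2.mul_left_cancel ?_)
      rw [mul_zero, sub_mul, one_mul, hidem, sub_self]
  rcases hze with h0 | h1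
  · exfalso
    have hN : ∀ n : N, n = 0 := by
      intro n
      have h1' : π (h (n, 0)) = h (n, 0) := by
        rw [hπ_apply, h.symm_apply_apply]
      rw [hπ, h0, mul_zero] at h1'
      have : ((n, 0) : N × (N ⊗[R] K)) = 0 := by
        apply h.injective
        rw [map_zero, ← h1']
      exact congrArg Prod.fst this
    have : Subsingleton N := ⟨fun a b => by rw [hN a, hN b]⟩
    have : Subsingleton (N ⊗[R] M) := aux_subsingleton_tensor_left
    have : Subsingleton R := e.symm.toEquiv.subsingleton
    exact zero_ne_one (Subsingleton.elim (0 : R) 1)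
  · have hW : ∀ w : N ⊗[R] K, w = 0 := by
      intro w
      have h1' : π (h (0, w)) = h (0, w) := by rw [hπ, h1, mul_one]
      have h2' : π (h ((0 : N), w)) = 0 := by
        rw [hπ_apply, h.symm_apply_apply]
        show h ((0 : N), (0 : N ⊗[R] K)) = 0
        rw [show ((0 : N), (0 : N ⊗[R] K)) = (0 : N × (N ⊗[R] K)) from rfl, map_zero]
      have : ((0 : N), w) = (0 : N × (N ⊗[R] K)) := by
        apply h.injective
        rw [map_zero, ← h2', h1']
      exact congrArg Prod.snd this
    have hsW : Subsingleton (N ⊗[R] K) := ⟨fun a b => by rw [hW a, hW b]⟩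
    have hsK : Subsingleton K := by
      let ε : K ≃ₗ[R] M ⊗[R] (N ⊗[R] K) :=
        (TensorProduct.lid R K).symm ≪≫ₗ
          (TensorProduct.congr e.symm (LinearEquiv.refl R K)) ≪≫ₗ
          (TensorProduct.congr (TensorProduct.comm R N M) (LinearEquiv.refl R K)) ≪≫ₗ
          (TensorProduct.assoc R M N K)
      have : Subsingleton (M ⊗[R] (N ⊗[R] K)) := aux_subsingleton_tensor_right
      exact ε.toEquiv.subsingleton
    have hKbot : K = ⊥ := by
      rw [Submodule.eq_bot_iff]
      intro z hz
      exact congrArg Subtype.val (Subsingleton.elim (⟨z, hz⟩ : K) 0)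
    have hinj : Function.Injective g := LinearMap.ker_eq_bot.mp hKbot
    have hsurj : Function.Surjective g := fun r => ⟨f r, hgf r⟩
    exact ⟨LinearEquiv.ofBijective g ⟨hinj, hsurj⟩⟩

end Aux

section Prime

variable {R : Type*} [CommRing R] {M N : Type*}
  [AddCommGroup M] [Module R M] [AddCommGroup N] [Module R N]

/-- The per-prime construction: the localization of an invertible module at a prime is free of
rank one, and the dual-basis identity holds in the localization. -/
theorem aux_prime (e : N ⊗[R] M ≃ₗ[R] R) (T : Finset (N × M))
    (hT : e (∑ q ∈ T, q.1 ⊗ₜ[R] q.2) = 1) (p : Ideal R) (hp : p.IsPrime) :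
    Nonempty (LocalizedModule p.primeCompl M ≃ₗ[Localization.AtPrime p]
        Localization.AtPrime p) ∧
      ∀ m : M, ∑ i : T, e ((i : N × M).1 ⊗ₜ[R] m) •
          LocalizedModule.mkLinearMap p.primeCompl M (i : N × M).2 =
        LocalizedModule.mkLinearMap p.primeCompl M m := by
  classical
  letI S := Localization.AtPrime p
  let lM := LocalizedModule.mkLinearMap p.primeCompl M
  have bc : IsBaseChange S lM := IsLocalizedModule.isBaseChange p.primeCompl S lM
  let eqM : S ⊗[R] M ≃ₗ[S] LocalizedModule p.primeCompl M := bc.equiv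
  let ES : (S ⊗[R] N) ⊗[S] (S ⊗[R] M) ≃ₗ[S] S :=
    (TensorProduct.AlgebraTensorModule.distribBaseChange R S N M).symm ≪≫ₗ
      LinearEquiv.baseChange R S (N ⊗[R] M) R e ≪≫ₗ TensorProduct.AlgebraTensorModule.rid R S S
  have hES : ∀ (n : N) (x : M),
      ES (((1 : S) ⊗ₜ[R] n) ⊗ₜ[S] ((1 : S) ⊗ₜ[R] x)) = algebraMap R S (e (n ⊗ₜ[R] x)) := by
    intro n x
    show (TensorProduct.AlgebraTensorModule.rid R S S) ((LinearEquiv.baseChange R S (N ⊗[R] M) R e)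
      ((TensorProduct.AlgebraTensorModule.distribBaseChange R S N M).symm
        (((1 : S) ⊗ₜ[R] n) ⊗ₜ[S] ((1 : S) ⊗ₜ[R] x)))) = _
    have h1 : (TensorProduct.AlgebraTensorModule.distribBaseChange R S N M).symm
        (((1 : S) ⊗ₜ[R] n) ⊗ₜ[S] ((1 : S) ⊗ₜ[R] x)) = (1 : S) ⊗ₜ[R] (n ⊗ₜ[R] x) := by
      simp [TensorProduct.AlgebraTensorModule.distribBaseChange]
    have h2 : LinearEquiv.baseChange R S (N ⊗[R] M) R e ((1 : S) ⊗ₜ[R] (n ⊗ₜ[R] x))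
        = (1 : S) ⊗ₜ[R] (e (n ⊗ₜ[R] x)) := by
      simp [LinearEquiv.baseChange]
    rw [h1, h2, TensorProduct.AlgebraTensorModule.rid_tmul, Algebra.algebraMap_eq_smul_one]
  have hz : ES (∑ i : T, ((1 : S) ⊗ₜ[R] (i : N × M).1) ⊗ₜ[S] ((1 : S) ⊗ₜ[R] (i : N × M).2))
      = 1 := by
    rw [map_sum]
    have : ∀ i : T, ES (((1 : S) ⊗ₜ[R] (i : N × M).1) ⊗ₜ[S] ((1 : S) ⊗ₜ[R] (i : N × M).2))
        = algebraMap R S (e ((i : N × M).1 ⊗ₜ[R] (i : N × M).2)) := fun i => hES _ _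
    rw [Finset.sum_congr rfl fun i _ => this i, ← map_sum (algebraMap R S),
      Finset.sum_coe_sort T (fun q => e (q.1 ⊗ₜ[R] q.2)), ← map_sum, hT, map_one]
  haveI : IsLocalRing S := Localization.AtPrime.isLocalRing p
  obtain ⟨φS⟩ := aux_local ES
  refine ⟨⟨eqM.symm ≪≫ₗ φS⟩, fun m => ?_⟩
  have hkey := aux_key ES.toLinearMap φS Finset.univ
    (fun i : T => (1 : S) ⊗ₜ[R] (i : N × M).1) (fun i : T => (1 : S) ⊗ₜ[R] (i : N × M).2)
    (by simpa using hz) ((1 : S) ⊗ₜ[R] m)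
  have heqM : ∀ x : M, eqM ((1 : S) ⊗ₜ[R] x) = lM x := fun x => by
    rw [show eqM ((1 : S) ⊗ₜ[R] x) = (1 : S) • lM x from bc.equiv_tmul 1 x, one_smul]
  have := congrArg eqM hkey
  rw [map_sum, heqM m] at this
  rw [← this]
  apply Finset.sum_congr rfl
  intro i _
  rw [LinearEquiv.coe_coe, map_smul, heqM, hES, algebraMap_smul]

end Prime

/-- If `R` is a commutative ring and `M`, `N` are `R`-modules with `N ⊗[R] M ≅ R`, then `M` is a
finitely generated projective `R`-module and for every prime ideal `p` of `R` the localization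
`M_p` is free of rank `1` over `R_p`, i.e. `M_p ≅ R_p`. -/
theorem stmt_2 (R : Type*) [CommRing R] (M N : Type*)
    [AddCommGroup M] [Module R M] [AddCommGroup N] [Module R N]
    (e : N ⊗[R] M ≃ₗ[R] R) :
    Module.Finite R M ∧ Module.Projective R M ∧
      ∀ (p : Ideal R) [p.IsPrime],
        Nonempty (LocalizedModule p.primeCompl M ≃ₗ[Localization.AtPrime p]
          Localization.AtPrime p) := by
  classical
  obtain ⟨T, hT0⟩ := TensorProduct.exists_finset (e.symm 1)
  have hT : e (∑ q ∈ T, q.1 ⊗ₜ[R] q.2) = 1 := by rw [← hT0, e.apply_symm_apply]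
  let f : M →ₗ[R] (T → R) :=
    LinearMap.pi fun i => e.toLinearMap ∘ₗ TensorProduct.mk R N M (i : N × M).1
  let g : (T → R) →ₗ[R] M :=
    ∑ i : T, LinearMap.toSpanSingleton R M (i : N × M).2 ∘ₗ LinearMap.proj i
  have hgfm : ∀ m : M, g (f m) = ∑ i : T, e ((i : N × M).1 ⊗ₜ[R] m) • (i : N × M).2 := by
    intro m
    simp [g, f, LinearMap.sum_apply]
  have hgf : ∀ m : M, g (f m) = m := by
    intro m
    apply Module.eq_of_localization_maximal
      (fun (P : Ideal R) (_ : P.IsMaximal) => LocalizedModule P.primeCompl M)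
      (fun (P : Ideal R) (_ : P.IsMaximal) => LocalizedModule.mkLinearMap P.primeCompl M)
    intro P hP
    have hid := (aux_prime e T hT P hP.isPrime).2 m
    rw [hgfm, map_sum]
    rw [← hid]
    apply Finset.sum_congr rfl
    intro i _
    rw [map_smul]
  refine ⟨?_, ?_, ?_⟩
  · exact Module.Finite.of_surjective g (fun m => ⟨f m, hgf m⟩)
  · exact Module.Projective.of_split f g (LinearMap.ext hgf)
  · intro p hp
    exact (aux_prime e T hT p hp).1
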